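/- For every real number x, \sum_{n=1}^{\infty} \frac{\sqrt{n}}{n! \, n!} x^n = \frac{1}{2\sqrt{\pi}} \int_0^1 \left[ B(0,x) - B(0,xv) \right] \frac{dv}{v \, (-\ln v)^{3/2}}, where B(0,x) := \sum_{n=0}^{\infty} \frac{x^n}{n! \, n!}. -/

import Mathlib

open MeasureTheory Set Filter Real


lemma contOn_rpow (c : ℝ) : ContinuousOn (fun t : ℝ => t ^ c) (Ioi (0:ℝ)) := fun t ht =>
  (Real.continuousAt_rpow_const t c (Or.inl (ne_of_gt ht))).continuousWithinAt

lemma meas_uv' (n : ℕ) : AEStronglyMeasurable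
    (fun t : ℝ => (1 - Real.exp (-((n:ℝ) * t))) * t ^ (-(3:ℝ)/2)) (volume.restrict (Ioi (0:ℝ))) := by
  apply ContinuousOn.aestronglyMeasurable _ measurableSet_Ioi
  exact ((continuous_const.sub ((continuous_const.mul continuous_id).neg.rexp)).continuousOn).mul
    (contOn_rpow _)

-- integrability of (1 - exp(-(n t))) * t^(-3/2) on Ioi 0
lemma int_uv' (n : ℕ) :
    IntegrableOn (fun t : ℝ => (1 - Real.exp (-((n:ℝ) * t))) * t ^ (-(3:ℝ)/2)) (Ioi (0:ℝ)) := by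
  have key : ∀ t : ℝ, 0 < t → 0 ≤ 1 - Real.exp (-((n:ℝ) * t)) ∧ 1 - Real.exp (-((n:ℝ) * t)) ≤ (n:ℝ) * t := by
    intro t ht
    constructor
    · simp [Real.exp_le_one_iff.2]
      positivity
    · nlinarith [Real.add_one_le_exp (-((n:ℝ)*t))]
  rw [← Ioc_union_Ioi_eq_Ioi (zero_le_one (α := ℝ))]
  apply IntegrableOn.union
  · -- on Ioc 0 1, dominate by n * t^(-1/2)
    have hbase : IntegrableOn (fun t : ℝ => t ^ (-(1:ℝ)/2)) (Ioc (0:ℝ) 1) :=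
      (intervalIntegrable_iff_integrableOn_Ioc_of_le zero_le_one).1
        (intervalIntegral.intervalIntegrable_rpow' (by norm_num))
    have hint : IntegrableOn (fun t : ℝ => (n:ℝ) * t ^ (-(1:ℝ)/2)) (Ioc (0:ℝ) 1) :=
      hbase.const_mul _
    apply hint.mono' ((meas_uv' n).mono_measure (Measure.restrict_mono Ioc_subset_Ioi_self le_rfl))
    filter_upwards [ae_restrict_mem measurableSet_Ioc] with t ht
    obtain ⟨h0, h1⟩ := key t ht.1
    have ht0 : (0:ℝ) < t := ht.1
    rw [Real.norm_eq_abs, abs_mul, abs_of_nonneg h0, abs_of_nonneg (Real.rpow_nonneg ht0.le _)]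
    calc (1 - Real.exp (-((n:ℝ) * t))) * t ^ (-(3:ℝ)/2) ≤ ((n:ℝ) * t) * t ^ (-(3:ℝ)/2) := by
          apply mul_le_mul_of_nonneg_right h1 (Real.rpow_nonneg ht0.le _)
      _ = (n:ℝ) * t ^ (-(1:ℝ)/2) := by
          rw [mul_assoc]
          congr 1
          nth_rewrite 1 [← Real.rpow_one t]
          rw [← Real.rpow_add ht0]
          norm_num
  · -- on Ioi 1, dominate by t^(-3/2)
    have hint : IntegrableOn (fun t : ℝ => t ^ (-(3:ℝ)/2)) (Ioi (1:ℝ)) :=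
      integrableOn_Ioi_rpow_of_lt (by norm_num) one_pos
    apply hint.mono' ((meas_uv' n).mono_measure (Measure.restrict_mono (Ioi_subset_Ioi zero_le_one) le_rfl))
    filter_upwards [ae_restrict_mem measurableSet_Ioi] with t ht
    have ht0 : (0:ℝ) < t := lt_trans one_pos ht
    obtain ⟨h0, _⟩ := key t ht0
    rw [Real.norm_eq_abs, abs_mul, abs_of_nonneg h0, abs_of_nonneg (Real.rpow_nonneg ht0.le _)]
    have : 1 - Real.exp (-((n:ℝ) * t)) ≤ 1 := by nlinarith [Real.exp_pos (-((n:ℝ)*t))]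
    calc (1 - Real.exp (-((n:ℝ) * t))) * t ^ (-(3:ℝ)/2) ≤ 1 * t ^ (-(3:ℝ)/2) :=
          mul_le_mul_of_nonneg_right this (Real.rpow_nonneg ht0.le _)
      _ = t ^ (-(3:ℝ)/2) := one_mul _

-- integrability of exp(-(n t)) * t^(-1/2) type functions on Ioi 0, n ≥ 1
lemma int_gamma (n : ℕ) (hn : 1 ≤ n) :
    IntegrableOn (fun t : ℝ => t ^ ((1:ℝ)/2 - 1) * Real.exp (-((n:ℝ) * t))) (Ioi (0:ℝ)) := by
  have hbase : IntegrableOn (fun t : ℝ => Real.exp (-t) * t ^ ((1:ℝ)/2 - 1)) (Ioi (0:ℝ)) :=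
    Real.GammaIntegral_convergent (by norm_num)
  apply hbase.mono'
  · apply ContinuousOn.aestronglyMeasurable _ measurableSet_Ioi
    have h1 : ContinuousOn (fun t : ℝ => t ^ ((1:ℝ)/2 - 1)) (Ioi (0:ℝ)) := fun t ht =>
      (Real.continuousAt_rpow_const t _ (Or.inl (ne_of_gt ht))).continuousWithinAt
    exact h1.mul ((continuous_const.mul continuous_id).neg.rexp.continuousOn)
  · filter_upwards [ae_restrict_mem measurableSet_Ioi] with t ht
    have ht0 : (0:ℝ) < t := ht
    rw [Real.norm_eq_abs, abs_mul, abs_of_nonneg (Real.rpow_nonneg ht0.le _),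
      abs_of_nonneg (Real.exp_pos _).le, mul_comm]
    apply mul_le_mul_of_nonneg_right _ (Real.rpow_nonneg ht0.le _)
    apply Real.exp_le_exp.2
    have : (1:ℝ) ≤ (n:ℝ) := by exact_mod_cast hn
    nlinarith

lemma gamma_val (n : ℕ) (hn : 1 ≤ n) :
    ∫ t in Ioi (0:ℝ), t ^ ((1:ℝ)/2 - 1) * Real.exp (-((n:ℝ) * t))
      = Real.sqrt Real.pi / Real.sqrt n := by
  have hn0 : (0:ℝ) < n := by exact_mod_cast hn
  rw [Real.integral_rpow_mul_exp_neg_mul_Ioi (by norm_num) hn0, Real.Gamma_one_half_eq]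
  rw [← Real.sqrt_eq_rpow, one_div, Real.sqrt_inv]
  ring

section
variable (n : ℕ)

noncomputable def uu (t : ℝ) : ℝ := 1 - Real.exp (-((n:ℝ) * t))
noncomputable def uu' (t : ℝ) : ℝ := (n:ℝ) * Real.exp (-((n:ℝ) * t))
noncomputable def vv (_n : ℕ) (t : ℝ) : ℝ := -2 * t ^ (-(1:ℝ)/2)
noncomputable def vv' (_n : ℕ) (t : ℝ) : ℝ := t ^ (-(3:ℝ)/2)

lemma huu : ∀ t ∈ Ioi (0:ℝ), HasDerivAt (uu n) (uu' n t) t := by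
  intro t _
  have h1 : HasDerivAt (fun s : ℝ => -((n:ℝ) * s)) (-(n:ℝ)) t := by
    exact (((hasDerivAt_id t).const_mul (n:ℝ)).neg).congr_deriv (by simp)
  have h2 := h1.exp
  have h3 : HasDerivAt (fun x : ℝ => 1 - Real.exp (-((n:ℝ) * x))) (-(Real.exp (-((n:ℝ) * t)) * -(n:ℝ))) t :=
    h2.const_sub 1
  convert h3 using 1
  · rfl
  simp [uu', mul_comm]

lemma hvv : ∀ t ∈ Ioi (0:ℝ), HasDerivAt (vv n) (vv' n t) t := by
  intro t ht
  have h1 : HasDerivAt (fun s : ℝ => s ^ (-(1:ℝ)/2)) ((-(1:ℝ)/2) * t ^ (-(1:ℝ)/2 - 1)) t :=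
    Real.hasDerivAt_rpow_const (Or.inl (ne_of_gt ht))
  have h2 : HasDerivAt (fun y : ℝ => -2 * y ^ (-(1:ℝ)/2)) (-2 * ((-(1:ℝ)/2) * t ^ (-(1:ℝ)/2 - 1))) t :=
    h1.const_mul (-2 : ℝ)
  convert h2 using 1
  · rfl
  rw [show (-(1:ℝ)/2 - 1) = -(3:ℝ)/2 by norm_num]
  simp [vv']
  ring

lemma bound1 (t : ℝ) (ht : 0 < t) : ‖uu n t * vv n t‖ ≤ 2 * (n:ℝ) * t ^ ((1:ℝ)/2) := by
  have h0 : 0 ≤ uu n t := by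
    simp only [uu, sub_nonneg]
    exact Real.exp_le_one_iff.2 (neg_nonpos.2 (by positivity))
  have h1 : uu n t ≤ (n:ℝ) * t := by
    simp only [uu]
    nlinarith [Real.add_one_le_exp (-((n:ℝ)*t))]
  have hr : (0:ℝ) ≤ t ^ (-(1:ℝ)/2) := Real.rpow_nonneg ht.le _
  rw [norm_mul, Real.norm_eq_abs, Real.norm_eq_abs, abs_of_nonneg h0, vv, abs_mul]
  rw [abs_of_nonneg hr, show |(-2:ℝ)| = 2 by norm_num]
  calc uu n t * (2 * t ^ (-(1:ℝ)/2)) ≤ ((n:ℝ) * t) * (2 * t ^ (-(1:ℝ)/2)) := by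
        apply mul_le_mul_of_nonneg_right h1 (by positivity)
    _ = 2 * (n:ℝ) * (t * t ^ (-(1:ℝ)/2)) := by ring
    _ = 2 * (n:ℝ) * t ^ ((1:ℝ)/2) := by
        congr 1
        nth_rewrite 1 [← Real.rpow_one t]
        rw [← Real.rpow_add ht]
        norm_num

lemma bound2 (t : ℝ) (ht : 0 < t) : ‖uu n t * vv n t‖ ≤ 2 * t ^ (-(1:ℝ)/2) := by
  have h0 : 0 ≤ uu n t := by
    simp only [uu, sub_nonneg]
    exact Real.exp_le_one_iff.2 (neg_nonpos.2 (by positivity))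
  have h1 : uu n t ≤ 1 := by
    simp only [uu]
    nlinarith [Real.exp_pos (-((n:ℝ)*t))]
  have hr : (0:ℝ) ≤ t ^ (-(1:ℝ)/2) := Real.rpow_nonneg ht.le _
  rw [norm_mul, Real.norm_eq_abs, Real.norm_eq_abs, abs_of_nonneg h0, vv, abs_mul]
  rw [abs_of_nonneg hr, show |(-2:ℝ)| = 2 by norm_num]
  calc uu n t * (2 * t ^ (-(1:ℝ)/2)) ≤ 1 * (2 * t ^ (-(1:ℝ)/2)) := by
        apply mul_le_mul_of_nonneg_right h1 (by positivity)
    _ = 2 * t ^ (-(1:ℝ)/2) := one_mul _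

lemma h_zero : Tendsto (uu n * vv n) (nhdsWithin 0 (Ioi (0:ℝ))) (nhds 0) := by
  rw [show ((0:ℝ)) = 0 from rfl]
  apply tendsto_zero_iff_norm_tendsto_zero.2
  apply squeeze_zero' (Eventually.of_forall fun t => norm_nonneg _)
  · filter_upwards [self_mem_nhdsWithin] with t (ht : (0:ℝ) < t)
    exact bound1 n t ht
  · have hc : Tendsto (fun t : ℝ => t ^ ((1:ℝ)/2)) (nhds 0) (nhds 0) := by
      have := (Real.continuousAt_rpow_const 0 ((1:ℝ)/2) (Or.inr (by norm_num))).tendsto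
      simpa [Real.zero_rpow (by norm_num : ((1:ℝ)/2) ≠ 0)] using this
    have h2 : Tendsto (fun t : ℝ => 2 * (n:ℝ) * t ^ ((1:ℝ)/2)) (nhdsWithin 0 (Ioi (0:ℝ))) (nhds (2 * (n:ℝ) * 0)) :=
      (hc.const_mul (2 * (n:ℝ))).mono_left nhdsWithin_le_nhds
    simpa using h2

lemma h_infty : Tendsto (uu n * vv n) atTop (nhds 0) := by
  apply tendsto_zero_iff_norm_tendsto_zero.2
  apply squeeze_zero' (Eventually.of_forall fun t => norm_nonneg _)
  · filter_upwards [eventually_gt_atTop (0:ℝ)] with t ht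
    exact bound2 n t ht
  · have hc : Tendsto (fun t : ℝ => t ^ (-((1:ℝ)/2))) atTop (nhds 0) :=
      tendsto_rpow_neg_atTop (by norm_num)
    have := hc.const_mul (2:ℝ)
    simp only [mul_zero] at this
    convert this using 2 with t
    rw [show (-(1:ℝ)/2) = -((1:ℝ)/2) by norm_num]
end

lemma t_integral (n : ℕ) (hn : 1 ≤ n) :
    ∫ t in Ioi (0:ℝ), (1 - Real.exp (-((n:ℝ) * t))) * t ^ (-(3:ℝ)/2)
      = 2 * Real.sqrt Real.pi * Real.sqrt n := by
  have hn0 : (0:ℝ) < n := by exact_mod_cast hn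
  have hsq : (0:ℝ) < Real.sqrt n := Real.sqrt_pos.2 hn0
  have huv' : IntegrableOn (uu n * vv' n) (Ioi (0:ℝ)) := by
    have := int_uv' n
    exact this.congr_fun (fun t _ => rfl) measurableSet_Ioi
  have hu'v : IntegrableOn (uu' n * vv n) (Ioi (0:ℝ)) := by
    have h := ((int_gamma n hn).const_mul ((-2:ℝ) * n))
    apply IntegrableOn.congr_fun h _ measurableSet_Ioi
    intro t ht
    simp only [uu', vv, Pi.mul_apply]
    rw [show ((1:ℝ)/2 - 1) = -(1:ℝ)/2 by norm_num]
    ring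
  have key := integral_Ioi_mul_deriv_eq_deriv_mul (huu n) (hvv n) huv' hu'v (h_zero n) (h_infty n)
  have h2 : ∫ t in Ioi (0:ℝ), uu' n t * vv n t = -2 * (n:ℝ) * (Real.sqrt Real.pi / Real.sqrt n) := by
    rw [← gamma_val n hn, ← integral_const_mul]
    apply setIntegral_congr_fun measurableSet_Ioi
    intro t ht
    simp only [uu', vv]
    rw [show ((1:ℝ)/2 - 1) = -(1:ℝ)/2 by norm_num]
    ring
  have h3 : (∫ t in Ioi (0:ℝ), (1 - Real.exp (-((n:ℝ) * t))) * t ^ (-(3:ℝ)/2))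
      = ∫ t in Ioi (0:ℝ), uu n t * vv' n t := rfl
  rw [h3, key, h2]
  have hnn : (n:ℝ) = Real.sqrt n * Real.sqrt n := (Real.mul_self_sqrt hn0.le).symm
  field_simp
  linear_combination (2 * Real.sqrt Real.pi) * hnn

lemma image_exp_neg : (fun t : ℝ => Real.exp (-t)) '' (Ioi 0) = Ioo (0:ℝ) 1 := by
  ext y
  constructor
  · rintro ⟨t, ht, rfl⟩
    exact ⟨Real.exp_pos _, Real.exp_lt_one_iff.2 (neg_neg_iff_pos.mpr ht)⟩
  · rintro ⟨hy0, hy1⟩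
    exact ⟨-Real.log y, by simpa using Real.log_neg hy0 hy1, by simp [Real.exp_log hy0]⟩

lemma inj_exp_neg : InjOn (fun t : ℝ => Real.exp (-t)) (Ioi 0) := fun a _ b _ h => by
  simpa using Real.exp_injective h

lemma deriv_exp_neg : ∀ t ∈ Ioi (0:ℝ),
    HasDerivWithinAt (fun t : ℝ => Real.exp (-t)) (-Real.exp (-t)) (Ioi 0) t := by
  intro t _
  exact ((hasDerivAt_id t).neg.exp.congr_deriv (by simp)).hasDerivWithinAt

-- pointwise equality of substituted integrand
lemma subst_eq (n : ℕ) : ∀ t ∈ Ioi (0:ℝ),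
    |(-Real.exp (-t))| • ((1 - Real.exp (-t) ^ n) /
        (Real.exp (-t) * (-Real.log (Real.exp (-t))) ^ ((3:ℝ)/2)))
      = (1 - Real.exp (-((n:ℝ) * t))) * t ^ (-(3:ℝ)/2) := by
  intro t ht
  have ht0 : (0:ℝ) < t := ht
  rw [abs_neg, abs_of_nonneg (Real.exp_pos _).le, Real.log_exp, neg_neg, smul_eq_mul]
  rw [← Real.exp_nat_mul, show (-(3:ℝ)/2) = -((3:ℝ)/2) by norm_num, Real.rpow_neg ht0.le,
    show (n:ℝ) * -t = -((n:ℝ) * t) by ring]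
  have h1 : Real.exp (-t) ≠ 0 := Real.exp_ne_zero _
  have h2 : t ^ ((3:ℝ)/2) ≠ 0 := ne_of_gt (Real.rpow_pos_of_pos ht0 _)
  field_simp

lemma v_integral (n : ℕ) :
    ∫ v in Ioo (0:ℝ) 1, (1 - v ^ n) / (v * (-Real.log v) ^ ((3:ℝ)/2))
      = 2 * Real.sqrt Real.pi * Real.sqrt n := by
  cases n with
  | zero => simp
  | succ m =>
    rw [← image_exp_neg, integral_image_eq_integral_abs_deriv_smul measurableSet_Ioi
      deriv_exp_neg inj_exp_neg]
    rw [setIntegral_congr_fun measurableSet_Ioi (subst_eq (m+1))]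
    exact t_integral (m+1) (by omega)

lemma v_integrable (n : ℕ) :
    IntegrableOn (fun v : ℝ => (1 - v ^ n) / (v * (-Real.log v) ^ ((3:ℝ)/2))) (Ioo (0:ℝ) 1) := by
  rw [← image_exp_neg, integrableOn_image_iff_integrableOn_abs_deriv_smul measurableSet_Ioi
    deriv_exp_neg inj_exp_neg]
  exact IntegrableOn.congr_fun (int_uv' n) (fun t ht => (subst_eq n t ht).symm) measurableSet_Ioi

lemma v_nonneg (n : ℕ) {v : ℝ} (hv : v ∈ Ioo (0:ℝ) 1) :
    0 ≤ (1 - v ^ n) / (v * (-Real.log v) ^ ((3:ℝ)/2)) := by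
  obtain ⟨h0, h1⟩ := hv
  apply div_nonneg
  · have : v ^ n ≤ 1 := pow_le_one₀ h0.le h1.le
    linarith
  · have : 0 < -Real.log v := neg_pos.2 (Real.log_neg h0 h1)
    positivity

lemma summable_c (y : ℝ) :
    Summable (fun n : ℕ => y ^ n / ((n.factorial : ℝ) * n.factorial)) := by
  apply Summable.of_norm_bounded (Real.summable_pow_div_factorial |y|)
  intro n
  have h1 : (1:ℝ) ≤ (n.factorial : ℝ) := by exact_mod_cast Nat.one_le_iff_ne_zero.2 n.factorial_pos.ne'
  simp only [Real.norm_eq_abs, abs_div, abs_pow, abs_mul, Nat.abs_cast]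
  apply div_le_div_of_nonneg_left (by positivity) (by positivity)
  nlinarith

lemma sqrt_le_two_pow (n : ℕ) : Real.sqrt n ≤ 2 ^ n := by
  cases n with
  | zero => simp
  | succ m =>
    have h1 : (1:ℝ) ≤ ((m+1:ℕ):ℝ) := by exact_mod_cast Nat.succ_le_succ (Nat.zero_le m)
    have h2 : Real.sqrt ((m+1:ℕ):ℝ) ≤ ((m+1:ℕ):ℝ) := by
      have h := Real.sqrt_le_sqrt (show ((m+1:ℕ):ℝ) ≤ ((m+1:ℕ):ℝ)^2 by nlinarith)
      rwa [Real.sqrt_sq (by linarith)] at h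
    have h3 : ((m+1:ℕ):ℝ) ≤ 2 ^ (m+1) := by exact_mod_cast (m+1).lt_two_pow_self.le
    exact h2.trans h3

theorem sqrt_bessel_integral_rep' (x : ℝ) :
    (∑' n : ℕ, Real.sqrt n / ((n.factorial : ℝ) * (n.factorial : ℝ)) * x ^ n)
      = (1 / (2 * Real.sqrt Real.pi)) *
          ∫ v in Set.Ioo (0 : ℝ) 1,
            ((∑' n : ℕ, x ^ n / ((n.factorial : ℝ) * (n.factorial : ℝ))) -
              (∑' n : ℕ, (x * v) ^ n / ((n.factorial : ℝ) * (n.factorial : ℝ)))) /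
            (v * (-Real.log v) ^ ((3 : ℝ) / 2)) := by
  have hπ : (0:ℝ) < Real.sqrt Real.pi := Real.sqrt_pos.2 Real.pi_pos
  have hFint : ∀ n : ℕ, Integrable
      (fun v : ℝ => (x ^ n / ((n.factorial : ℝ) * n.factorial)) *
        ((1 - v ^ n) / (v * (-Real.log v) ^ ((3:ℝ)/2)))) (volume.restrict (Ioo (0:ℝ) 1)) :=
    fun n => (v_integrable n).const_mul _
  have hnorm : ∀ n : ℕ, (∫ v in Ioo (0:ℝ) 1, ‖(x ^ n / ((n.factorial : ℝ) * n.factorial)) *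
        ((1 - v ^ n) / (v * (-Real.log v) ^ ((3:ℝ)/2)))‖)
      = |x ^ n / ((n.factorial : ℝ) * n.factorial)| * (2 * Real.sqrt Real.pi * Real.sqrt n) := by
    intro n
    rw [← v_integral n, ← integral_const_mul]
    apply setIntegral_congr_fun measurableSet_Ioo
    intro v hv
    simp only [norm_mul, Real.norm_eq_abs]
    rw [abs_of_nonneg (v_nonneg n hv)]
  have hsum : Summable (fun n : ℕ => ∫ v in Ioo (0:ℝ) 1, ‖(x ^ n / ((n.factorial : ℝ) * n.factorial)) *
      ((1 - v ^ n) / (v * (-Real.log v) ^ ((3:ℝ)/2)))‖) := by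
    apply Summable.of_nonneg_of_le
      (fun n => integral_nonneg fun v => norm_nonneg _)
      (fun n => ?_)
      (((Real.summable_pow_div_factorial (2*|x|)).mul_left (2 * Real.sqrt Real.pi)))
    rw [hnorm n]
    have hf1 : (1:ℝ) ≤ (n.factorial : ℝ) := by exact_mod_cast Nat.one_le_iff_ne_zero.2 n.factorial_pos.ne'
    have hs2 : Real.sqrt n ≤ 2 ^ n := sqrt_le_two_pow n
    have habs : |x ^ n / ((n.factorial : ℝ) * n.factorial)| = |x| ^ n / ((n.factorial : ℝ) * n.factorial) := by
      simp [abs_div, abs_pow, abs_mul, Nat.abs_cast]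
    rw [habs]
    have key : |x| ^ n / ((n.factorial : ℝ) * n.factorial) * Real.sqrt n
        ≤ (2 * |x|) ^ n / (n.factorial : ℝ) := by
      rw [mul_pow, div_mul_eq_mul_div]
      apply div_le_div₀ (by positivity) ?_ (by positivity) (by nlinarith)
      have h0 : (0:ℝ) ≤ |x| ^ n := by positivity
      calc |x| ^ n * Real.sqrt n ≤ |x| ^ n * 2 ^ n := by
            exact mul_le_mul_of_nonneg_left hs2 h0
        _ = 2 ^ n * |x| ^ n := by ring
    calc |x| ^ n / ((n.factorial : ℝ) * n.factorial) * (2 * Real.sqrt Real.pi * Real.sqrt n)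
        = (2 * Real.sqrt Real.pi) * (|x| ^ n / ((n.factorial : ℝ) * n.factorial) * Real.sqrt n) := by ring
      _ ≤ (2 * Real.sqrt Real.pi) * ((2 * |x|) ^ n / (n.factorial : ℝ)) :=
          mul_le_mul_of_nonneg_left key (by positivity)
  have h1 : EqOn
      (fun v : ℝ => ((∑' n : ℕ, x ^ n / ((n.factorial : ℝ) * (n.factorial : ℝ))) -
              (∑' n : ℕ, (x * v) ^ n / ((n.factorial : ℝ) * (n.factorial : ℝ)))) /
            (v * (-Real.log v) ^ ((3 : ℝ) / 2)))
      (fun v : ℝ => ∑' n : ℕ, (x ^ n / ((n.factorial : ℝ) * n.factorial)) *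
        ((1 - v ^ n) / (v * (-Real.log v) ^ ((3:ℝ)/2))))
      (Ioo (0:ℝ) 1) := by
    intro v hv
    simp only
    rw [← Summable.tsum_sub (summable_c x) (summable_c (x*v)), ← tsum_div_const]
    apply tsum_congr
    intro n
    rw [mul_pow]
    ring
  have key : (∫ v in Set.Ioo (0 : ℝ) 1,
        ((∑' n : ℕ, x ^ n / ((n.factorial : ℝ) * (n.factorial : ℝ))) -
          (∑' n : ℕ, (x * v) ^ n / ((n.factorial : ℝ) * (n.factorial : ℝ)))) /
        (v * (-Real.log v) ^ ((3 : ℝ) / 2)))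
      = ∑' n : ℕ, (x ^ n / ((n.factorial : ℝ) * n.factorial)) * (2 * Real.sqrt Real.pi * Real.sqrt n) := by
    rw [setIntegral_congr_fun measurableSet_Ioo h1,
      ← integral_tsum_of_summable_integral_norm hFint hsum]
    apply tsum_congr
    intro n
    rw [integral_const_mul, v_integral n]
  rw [key, ← tsum_mul_left]
  apply tsum_congr
  intro n
  field_simp
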